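/- If I, J are disjoint 3-subsets of {1,…,10}, then the reflections κ_I and κ_J satisfy the braid relation κ_I κ_J κ_I = κ_J κ_I κ_J. -/
import Mathlib


/-- The standard basis vectors of ℝ^{1,10}. -/
noncomputable def e (i : Fin 11) : Fin 11 → ℝ := fun j => if j = i then 1 else 0

/-- The Lorentzian bilinear form x·y = x₀y₀ − ∑_{k=1}^{10} x_k y_k on ℝ^{1,10}. -/
noncomputable def lor (x y : Fin 11 → ℝ) : ℝ :=
  x 0 * y 0 - ∑ k : Fin 10, x k.succ * y k.succ

/-- For a 3-subset I ⊆ {1,…,10}, the root α_I = e₀ − ∑_{t ∈ I} e t. -/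
noncomputable def alphaI (I : Finset (Fin 11)) : Fin 11 → ℝ :=
  e 0 - ∑ t ∈ I, e t

/-- The reflection κ_I(x) = x + (x·α_I) α_I. -/
noncomputable def kappa (I : Finset (Fin 11)) (x : Fin 11 → ℝ) : Fin 11 → ℝ :=
  x + lor x (alphaI I) • alphaI I


lemma alphaI_apply (I : Finset (Fin 11)) (j : Fin 11) :
    alphaI I j = (if j = 0 then 1 else 0) - (if j ∈ I then 1 else 0) := by
  simp [alphaI, e, Finset.sum_apply, Finset.sum_ite_eq]

lemma lor_add_smul (x v y : Fin 11 → ℝ) (c : ℝ) :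
    lor (x + c • v) y = lor x y + c * lor v y := by
  simp only [lor, Pi.add_apply, Pi.smul_apply, smul_eq_mul, add_mul,
    Finset.sum_add_distrib]
  rw [mul_sub, Finset.mul_sum]
  simp only [mul_assoc]
  ring

lemma lor_alpha (I J : Finset (Fin 11)) (h0I : (0 : Fin 11) ∉ I) (h0J : (0 : Fin 11) ∉ J) :
    lor (alphaI I) (alphaI J) = 1 - ((I ∩ J).card : ℝ) := by
  have key : ∀ k : Fin 10, alphaI I k.succ * alphaI J k.succ
      = (if k.succ ∈ I ∩ J then (1:ℝ) else 0) := by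
    intro k
    simp only [alphaI_apply, Fin.succ_ne_zero, if_false, Finset.mem_inter]
    by_cases h1 : k.succ ∈ I <;> by_cases h2 : k.succ ∈ J <;> simp [h1, h2]
  have hsum : ∑ k : Fin 10, alphaI I k.succ * alphaI J k.succ
      = ((I ∩ J).card : ℝ) := by
    rw [Finset.sum_congr rfl (fun k _ => key k)]
    have := Fin.sum_univ_succ (fun j : Fin 11 => if j ∈ I ∩ J then (1:ℝ) else 0)
    have h0 : (0 : Fin 11) ∉ I ∩ J := by simp [h0I]
    rw [if_neg h0, zero_add] at this
    rw [← this, Finset.sum_ite_mem, Finset.univ_inter, Finset.sum_const,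
      nsmul_eq_mul, mul_one]
  have h1 : alphaI I 0 = 1 := by simp [alphaI_apply, h0I]
  have h2 : alphaI J 0 = 1 := by simp [alphaI_apply, h0J]
  rw [lor, hsum, h1, h2, one_mul]

theorem kappa_disjoint_braid (I J : Finset (Fin 11))
    (hI : I.card = 3) (hJ : J.card = 3)
    (h0I : (0 : Fin 11) ∉ I) (h0J : (0 : Fin 11) ∉ J)
    (hIJ : Disjoint I J) :
    ∀ x, kappa I (kappa J (kappa I x)) = kappa J (kappa I (kappa J x)) := by
  intro x
  set A := alphaI I with hA
  set B := alphaI J with hB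
  have hAA : lor A A = -2 := by
    rw [hA, lor_alpha I I h0I h0I, Finset.inter_self, hI]; norm_num
  have hBB : lor B B = -2 := by
    rw [hB, lor_alpha J J h0J h0J, Finset.inter_self, hJ]; norm_num
  have hAB : lor A B = 1 := by
    rw [hA, hB, lor_alpha I J h0I h0J, Finset.disjoint_iff_inter_eq_empty.mp hIJ]
    simp
  have hBA : lor B A = 1 := by
    rw [hA, hB, lor_alpha J I h0J h0I,
      Finset.inter_comm, Finset.disjoint_iff_inter_eq_empty.mp hIJ]
    simp
  simp only [kappa, ← hA, ← hB, lor_add_smul, hAA, hBB, hAB, hBA]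
  module
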